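/- (Double complex boundary identity.) With F^k = (L d)^k f and K^i = g d F^{i-1} (for i ≥ 1), K^0 = ∂, where f : P → E⊗C is a chain map, g its chain homotopy inverse, L : fg ≃ 1 a chain homotopy, and d the boundary of the resolution E: for all m ≥ 1, ∂F^m + (−1)^{m+1} F^m ∂ = Σ_{k=0}^{m−1} (−1)^k F^k K^{m−k} − d F^{m−1}, and ∂F^0 = F^0 ∂. -/
import Mathlib


section
variable (R : Type) [Ring R] (P T : Type) [AddCommGroup P] [AddCommGroup T]
  [Module R P] [Module R T]

/-- `F^k = (L d)^k f`. -/
def Fpow (f : P →ₗ[R] T) (d L : T →ₗ[R] T) : ℕ → (P →ₗ[R] T)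
  | 0 => f
  | k + 1 => L ∘ₗ d ∘ₗ Fpow f d L k

/-- `K^0 = ∂`, `K^i = g d F^{i-1}` for `i ≥ 1`. -/
def Kmap (f : P →ₗ[R] T) (d L : T →ₗ[R] T) (g : T →ₗ[R] P) (dP : P →ₗ[R] P) :
    ℕ → (P →ₗ[R] P)
  | 0 => dP
  | i + 1 => g ∘ₗ d ∘ₗ Fpow R P T f d L i

/-- double complex boundary identity: with `F^k = (Ld)^k f` and
`K^i = g d F^{i-1}` (`K^0 = ∂`), where `f` is a chain map with chain homotopy inverse `g`,
`L : fg ≃ 1` a chain homotopy, and `d` the boundary of the resolution `E` (internal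
bigrading suppressed): `∂F^0 = F^0 ∂`, and for all `m ≥ 1`,
`∂F^m + (−1)^{m+1} F^m ∂ = Σ_{k=0}^{m−1} (−1)^k F^k K^{m−k} − d F^{m−1}`. -/
theorem double_complex_boundary_identity
    (f : P →ₗ[R] T) (g : T →ₗ[R] P) (d L dT : T →ₗ[R] T) (dP : P →ₗ[R] P)
    (hdd : d ∘ₗ d = 0) (hTT : dT ∘ₗ dT = 0) (hPP : dP ∘ₗ dP = 0)
    (hcomm : dT ∘ₗ d = d ∘ₗ dT)
    (hf : dT ∘ₗ f = f ∘ₗ dP) (hg : dP ∘ₗ g = g ∘ₗ dT)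
    (hL : dT ∘ₗ L + L ∘ₗ dT = f ∘ₗ g - LinearMap.id) :
    (dT ∘ₗ Fpow R P T f d L 0 = Fpow R P T f d L 0 ∘ₗ dP) ∧
    ∀ m : ℕ, 1 ≤ m →
      dT ∘ₗ Fpow R P T f d L m + ((-1 : ℤ) ^ (m + 1)) • (Fpow R P T f d L m ∘ₗ dP) =
      (∑ k ∈ Finset.range m,
        ((-1 : ℤ) ^ k) • (Fpow R P T f d L k ∘ₗ Kmap R P T f d L g dP (m - k))) -
      d ∘ₗ Fpow R P T f d L (m - 1) := by
  constructor
  · exact hf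
  · set F := Fpow R P T f d L with hF
    set K := Kmap R P T f d L g dP with hK
    have compz : ∀ (A : T →ₗ[R] T) (z : ℤ) (B : P →ₗ[R] T),
        A ∘ₗ (z • B) = z • (A ∘ₗ B) := by
      intro A z B; ext x; simp
    have compsum : ∀ (A : T →ₗ[R] T) (s : Finset ℕ) (B : ℕ → (P →ₗ[R] T)),
        A ∘ₗ (∑ k ∈ s, B k) = ∑ k ∈ s, A ∘ₗ B k := by
      intro A s B; ext x; simp
    have hdTL : dT ∘ₗ L = f ∘ₗ g - LinearMap.id - L ∘ₗ dT := by
      rw [eq_sub_iff_add_eq]; exact hL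
    have keyA : ∀ m : ℕ, dT ∘ₗ F (m+1) =
        f ∘ₗ K (m+1) - d ∘ₗ F m - (L ∘ₗ d) ∘ₗ (dT ∘ₗ F m) := by
      intro m
      have h1 : F (m+1) = L ∘ₗ (d ∘ₗ F m) := rfl
      have h2 : K (m+1) = g ∘ₗ (d ∘ₗ F m) := rfl
      rw [h1, h2, ← LinearMap.comp_assoc, hdTL]
      simp only [LinearMap.sub_comp, LinearMap.id_comp, LinearMap.comp_assoc]
      rw [show dT ∘ₗ (d ∘ₗ F m) = d ∘ₗ (dT ∘ₗ F m) by
        rw [← LinearMap.comp_assoc, hcomm, LinearMap.comp_assoc]]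
    intro m hm
    induction m, hm using Nat.le_induction with
    | base =>
      have h0 : dT ∘ₗ F 0 = F 0 ∘ₗ dP := hf
      have := keyA 0
      rw [h0] at this
      have hF1 : (L ∘ₗ d) ∘ₗ (F 0 ∘ₗ dP) = F 1 ∘ₗ dP := by
        simp only [LinearMap.comp_assoc]; rfl
      rw [hF1] at this
      rw [this]
      simp only [Finset.sum_range_one, pow_zero, one_smul, pow_succ, pow_one,
        neg_mul, one_mul, neg_neg]
      have : F 0 ∘ₗ K 1 = f ∘ₗ K 1 := rfl
      rw [this]
      abel
    | succ n hn ih =>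
      have hsub : n + 1 - 1 = n := rfl
      have hdTFn : dT ∘ₗ F n =
          (∑ k ∈ Finset.range n, ((-1 : ℤ) ^ k) • (F k ∘ₗ K (n - k)))
            - d ∘ₗ F (n - 1) - ((-1 : ℤ) ^ (n+1)) • (F n ∘ₗ dP) := by
        rw [eq_sub_iff_add_eq]; exact ih
      have hzero : (L ∘ₗ d) ∘ₗ (d ∘ₗ F (n-1)) = 0 := by
        ext x
        simp only [LinearMap.comp_apply, LinearMap.zero_apply]
        rw [show d ((d : T →ₗ[R] T) ((F (n-1)) x)) = 0 from
          LinearMap.ext_iff.mp hdd ((F (n-1)) x), map_zero]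
      have hLdsum : (L ∘ₗ d) ∘ₗ (dT ∘ₗ F n) =
          (∑ k ∈ Finset.range n, ((-1 : ℤ) ^ k) • (F (k+1) ∘ₗ K (n - k)))
            - ((-1 : ℤ) ^ (n+1)) • (F (n+1) ∘ₗ dP) := by
        have e1 : ∀ (k : ℕ) (B : P →ₗ[R] P), (L ∘ₗ d) ∘ₗ (F k ∘ₗ B) = F (k+1) ∘ₗ B := by
          intro k B
          show (L ∘ₗ d) ∘ₗ (F k ∘ₗ B) = (L ∘ₗ (d ∘ₗ F k)) ∘ₗ B
          simp only [LinearMap.comp_assoc]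
        rw [hdTFn]
        simp only [LinearMap.comp_sub, compsum, compz, hzero, sub_zero, e1]
      rw [hsub, keyA n, hLdsum]
      rw [Finset.sum_range_succ']
      simp only [Nat.succ_sub_succ, pow_zero, one_smul, Nat.sub_zero, pow_succ,
        neg_mul, one_mul, mul_neg, mul_one, neg_smul, neg_neg]
      have hf0 : F 0 ∘ₗ K (n+1) = f ∘ₗ K (n+1) := rfl
      rw [hf0]
      simp only [Finset.sum_neg_distrib]
      abel


end
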